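/- Let F be a field of characteristic different from 2, V a finite-dimensional vector space over F, A ∈ End(V), v ∈ V, and φ ∈ V^*. If φ(f(A)² v) = 0 for every polynomial f ∈ F[x], then φ(A^k v) = 0 for all integers k ≥ 0. -/

import Mathlib

theorem stmt6 {F V : Type*} [Field F] (hchar : ringChar F ≠ 2)
    [AddCommGroup V] [Module F V] [FiniteDimensional F V]
    (A : Module.End F V) (v : V) (φ : Module.Dual F V)
    (h : ∀ f : Polynomial F, φ (((Polynomial.aeval A f) ^ 2) v) = 0) :
    ∀ k : ℕ, φ ((A ^ k) v) = 0 := by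
  have key : ∀ f g : Polynomial F, φ ((Polynomial.aeval A (f * g)) v) = 0 := by
    intro f g
    set P := Polynomial.aeval A f with hP
    set Q := Polynomial.aeval A g with hQ
    have hcomm : P * Q = Q * P := by
      rw [hP, hQ, ← map_mul, ← map_mul, mul_comm]
    have hsq : (Polynomial.aeval A (f + g)) ^ 2 =
        P ^ 2 + (Polynomial.aeval A (f * g) + Polynomial.aeval A (f * g)) + Q ^ 2 := by
      rw [map_add, map_mul, ← hP, ← hQ]
      calc (P + Q) ^ 2 = P ^ 2 + (P * Q + Q * P) + Q ^ 2 := by noncomm_ring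
        _ = P ^ 2 + (P * Q + P * Q) + Q ^ 2 := by rw [hcomm]
    have h1 := h (f + g)
    rw [hsq] at h1
    simp only [LinearMap.add_apply, map_add, h f, h g] at h1
    have h1' : (2 : F) * φ ((Polynomial.aeval A (f * g)) v) = 0 := by
      rw [two_mul]; linear_combination h1 - (h f : φ ((P ^ 2) v) = 0) - (h g : φ ((Q ^ 2) v) = 0)
    exact (mul_eq_zero.mp h1').resolve_left (Ring.two_ne_zero hchar)
  intro k
  have := key (Polynomial.X ^ k) 1
  simpa using this
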